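/- Let n ≥ 5. Then the intersection ∩_{2 ≤ i < j ≤ n} E_{i,j} is exactly the one-dimensional linear span of the single tuple Σ_{k=2}^n e_k ⊗ e^A_{k,1}. -/

import Mathlib

open Matrix BigOperators

noncomputable section

/-- `e^A_{i,j} = e_i e_jᵀ − e_j e_iᵀ`. -/
def eA {n : ℕ} (i j : Fin n) : Matrix (Fin n) (Fin n) ℝ :=
  Matrix.single i j 1 - Matrix.single j i 1

/-- The action `(ρ(g)C)_μ := Σ_ν (g⁻¹)_{ν,μ} • g C_ν g⁻¹` on `n`-tuples of matrices. -/
def rho {n : ℕ} (g : Matrix (Fin n) (Fin n) ℝ)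
    (C : Fin n → Matrix (Fin n) (Fin n) ℝ) : Fin n → Matrix (Fin n) (Fin n) ℝ :=
  fun μ => ∑ ν, (g⁻¹ ν μ) • (g * C ν * g⁻¹)

/-- The plane rotation `g^θ_{i,j}`. -/
def rot {n : ℕ} (i j : Fin n) (θ : ℝ) : Matrix (Fin n) (Fin n) ℝ :=
  Matrix.of fun a b =>
    if a = i ∧ b = i then Real.cos θ
    else if a = j ∧ b = j then Real.cos θ
    else if a = i ∧ b = j then -Real.sin θ
    else if a = j ∧ b = i then Real.sin θ
    else if a = b then 1 else 0

/-- `E_{i,j}`: the skew-symmetric tuples fixed by `ρ(g^θ_{i,j})` for all `θ`. -/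
def Espace {n : ℕ} (i j : Fin n) : Set (Fin n → Matrix (Fin n) (Fin n) ℝ) :=
  {C | (∀ μ, (C μ)ᵀ = -(C μ)) ∧ ∀ θ : ℝ, rho (rot i j θ) C = C}

section Aux

set_option maxRecDepth 40000
set_option maxHeartbeats 1000000

lemma sum_apply_one {M : Type*} [AddCommMonoid M] {ι : Type*} [Fintype ι] [DecidableEq ι]
    (i : ι) (f : ι → M) (hf : ∀ c, c ≠ i → f c = 0) : ∑ c, f c = f i :=
  Finset.sum_eq_single i (fun c _ hc => hf c hc) (by simp)

lemma sum_apply_two {M : Type*} [AddCommMonoid M] {ι : Type*} [Fintype ι] [DecidableEq ι]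
    {i j : ι} (hij : i ≠ j) (f : ι → M) (hf : ∀ c, c ≠ i → c ≠ j → f c = 0) :
    ∑ c, f c = f i + f j := by
  rw [← Finset.sum_pair hij]
  exact (Finset.sum_subset (Finset.subset_univ _)
    (fun x _ hx => by
      simp only [Finset.mem_insert, Finset.mem_singleton] at hx
      exact hf x (fun h => hx (Or.inl h)) (fun h => hx (Or.inr h)))).symm

variable {n : ℕ}

lemma eA_apply (i j a b : Fin n) :
    eA i j a b = (if i = a ∧ j = b then (1:ℝ) else 0) - (if j = a ∧ i = b then 1 else 0) := by
  simp only [eA, Matrix.sub_apply, Matrix.single]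
  rfl

lemma rot_apply (i j : Fin n) (θ : ℝ) (a b : Fin n) : rot i j θ a b =
    if a = i ∧ b = i then Real.cos θ
    else if a = j ∧ b = j then Real.cos θ
    else if a = i ∧ b = j then -Real.sin θ
    else if a = j ∧ b = i then Real.sin θ
    else if a = b then 1 else 0 := rfl

lemma rot_mul_apply {i j : Fin n} (hij : i ≠ j) (θ : ℝ) (M : Matrix (Fin n) (Fin n) ℝ)
    (a b : Fin n) :
    (rot i j θ * M) a b =
      if a = i then Real.cos θ * M i b - Real.sin θ * M j b
      else if a = j then Real.sin θ * M i b + Real.cos θ * M j b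
      else M a b := by
  rw [Matrix.mul_apply]
  by_cases ha : a = i
  · subst ha
    rw [sum_apply_two hij (f := fun c => rot a j θ a c * M c b)
      (fun c hc1 hc2 => by simp [rot_apply, hc1, hc2, Ne.symm hc1, hij])]
    simp [rot_apply, hij, Ne.symm hij]
    try ring
  · by_cases ha' : a = j
    · subst ha'
      rw [sum_apply_two hij (f := fun c => rot i a θ a c * M c b)
        (fun c hc1 hc2 => by simp [rot_apply, hc1, hc2, Ne.symm hc2, hij, Ne.symm hij])]
      simp [rot_apply, hij, Ne.symm hij]
      try ring
    · rw [sum_apply_one a (f := fun c => rot i j θ a c * M c b)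
        (fun c hc => by simp [rot_apply, ha, ha', Ne.symm hc])]
      simp [rot_apply, ha, ha']

lemma mul_rot_apply {i j : Fin n} (hij : i ≠ j) (θ : ℝ) (M : Matrix (Fin n) (Fin n) ℝ)
    (a b : Fin n) :
    (M * rot i j θ) a b =
      if b = i then Real.cos θ * M a i + Real.sin θ * M a j
      else if b = j then -Real.sin θ * M a i + Real.cos θ * M a j
      else M a b := by
  rw [Matrix.mul_apply]
  by_cases hb : b = i
  · subst hb
    rw [sum_apply_two hij (f := fun c => M a c * rot b j θ c b)
      (fun c hc1 hc2 => by simp [rot_apply, hc1, hc2, Ne.symm hij, hij])]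
    simp [rot_apply, hij, Ne.symm hij]
    try ring
  · by_cases hb' : b = j
    · subst hb'
      rw [sum_apply_two hij (f := fun c => M a c * rot i b θ c b)
        (fun c hc1 hc2 => by simp [rot_apply, hc1, hc2, hij, Ne.symm hij])]
      simp [rot_apply, hij, Ne.symm hij]
      try ring
    · rw [sum_apply_one b (f := fun c => M a c * rot i j θ c b)
        (fun c hc => by simp [rot_apply, hb, hb', hc])]
      simp [rot_apply, hb, hb']

lemma rot_zero {i j : Fin n} (hij : i ≠ j) : rot i j 0 = 1 := by
  ext a b
  simp only [rot_apply, Real.cos_zero, Real.sin_zero, Matrix.one_apply, neg_zero]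
  split_ifs <;> simp_all <;> simp_all [eq_comm]

lemma rot_mul_rot {i j : Fin n} (hij : i ≠ j) (θ θ' : ℝ) :
    rot i j θ * rot i j θ' = rot i j (θ + θ') := by
  ext a b
  rw [rot_mul_apply hij]
  by_cases ha : a = i <;> by_cases ha2 : a = j <;> by_cases hb : b = i <;> by_cases hb2 : b = j <;>
    simp_all [rot_apply, eq_comm, Real.cos_add, Real.sin_add] <;> try ring

lemma rot_inv {i j : Fin n} (hij : i ≠ j) (θ : ℝ) : (rot i j θ)⁻¹ = rot i j (-θ) := by
  apply Matrix.inv_eq_right_inv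
  rw [rot_mul_rot hij, add_neg_cancel, rot_zero hij]

lemma rot_swap {i j : Fin n} (hij : i ≠ j) (θ : ℝ) : rot j i θ = rot i j (-θ) := by
  ext a b
  by_cases ha : a = i <;> by_cases ha2 : a = j <;> by_cases hb : b = i <;> by_cases hb2 : b = j <;>
    simp_all [rot_apply, eq_comm]

lemma rho_apply {i j : Fin n} (hij : i ≠ j) (θ : ℝ)
    (C : Fin n → Matrix (Fin n) (Fin n) ℝ) (μ : Fin n) :
    rho (rot i j θ) C μ =
      if μ = i then
        Real.cos θ • (rot i j θ * C i * rot i j (-θ)) -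
          Real.sin θ • (rot i j θ * C j * rot i j (-θ))
      else if μ = j then
        Real.sin θ • (rot i j θ * C i * rot i j (-θ)) +
          Real.cos θ • (rot i j θ * C j * rot i j (-θ))
      else rot i j θ * C μ * rot i j (-θ) := by
  unfold rho
  rw [rot_inv hij]
  by_cases hμ : μ = i
  · rw [sum_apply_two hij (f := fun ν => rot i j (-θ) ν μ • (rot i j θ * C ν * rot i j (-θ)))
      (fun ν hν1 hν2 => by simp [rot_apply, hμ, hν1, hν2, hij])]
    simp [rot_apply, hμ, hij, Ne.symm hij, sub_eq_add_neg]
  · by_cases hμ' : μ = j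
    · rw [sum_apply_two hij (f := fun ν => rot i j (-θ) ν μ • (rot i j θ * C ν * rot i j (-θ)))
        (fun ν hν1 hν2 => by simp [rot_apply, hμ', hν1, hν2, hij, Ne.symm hij])]
      simp [rot_apply, hμ', hij, Ne.symm hij, hμ]
    · rw [sum_apply_one μ (f := fun ν => rot i j (-θ) ν μ • (rot i j θ * C ν * rot i j (-θ)))
        (fun ν hν => by simp [rot_apply, hμ, hμ', Ne.symm hν]; tauto)]
      simp [rot_apply, hμ, hμ']

lemma rho_smul (g : Matrix (Fin n) (Fin n) ℝ) (r : ℝ)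
    (C : Fin n → Matrix (Fin n) (Fin n) ℝ) : rho g (r • C) = r • rho g C := by
  funext μ
  unfold rho
  rw [Pi.smul_apply, Finset.smul_sum]
  apply Finset.sum_congr rfl
  intro ν _
  rw [Pi.smul_apply, Matrix.mul_smul, Matrix.smul_mul, smul_comm]

lemma conj_pi_apply {i j : Fin n} (hij : i ≠ j) (M : Matrix (Fin n) (Fin n) ℝ) (a b : Fin n) :
    (rot i j Real.pi * M * rot i j (-Real.pi)) a b =
      (if a = i ∨ a = j then (-1:ℝ) else 1) * (if b = i ∨ b = j then (-1:ℝ) else 1) * M a b := by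
  simp only [mul_rot_apply hij, rot_mul_apply hij, Real.cos_pi, Real.sin_pi, Real.cos_neg,
    Real.sin_neg, neg_zero, neg_neg]
  by_cases ha : a = i <;> by_cases ha2 : a = j <;> by_cases hb : b = i <;> by_cases hb2 : b = j <;>
    simp_all <;> ring

lemma conj_eA_i {i j k : Fin n} (hij : i ≠ j) (hki : k ≠ i) (hkj : k ≠ j) (θ : ℝ) :
    rot i j θ * eA i k * rot i j (-θ) = Real.cos θ • eA i k + Real.sin θ • eA j k := by
  ext a b
  simp only [Matrix.add_apply, Matrix.smul_apply, smul_eq_mul]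
  simp only [mul_rot_apply hij, rot_mul_apply hij, Real.cos_neg, Real.sin_neg, eA_apply]
  by_cases ha : a = i <;> by_cases ha2 : a = j <;> by_cases hak : a = k <;>
    by_cases hb : b = i <;> by_cases hb2 : b = j <;> by_cases hbk : b = k <;>
    simp_all <;> (try ring) <;> (try simp_all [eq_comm]) <;> (try ring)

lemma conj_eA_j {i j k : Fin n} (hij : i ≠ j) (hki : k ≠ i) (hkj : k ≠ j) (θ : ℝ) :
    rot i j θ * eA j k * rot i j (-θ) = Real.cos θ • eA j k - Real.sin θ • eA i k := by
  ext a b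
  simp only [Matrix.sub_apply, Matrix.smul_apply, smul_eq_mul]
  simp only [mul_rot_apply hij, rot_mul_apply hij, Real.cos_neg, Real.sin_neg, eA_apply]
  by_cases ha : a = i <;> by_cases ha2 : a = j <;> by_cases hak : a = k <;>
    by_cases hb : b = i <;> by_cases hb2 : b = j <;> by_cases hbk : b = k <;>
    simp_all <;> (try ring) <;> (try simp_all [eq_comm]) <;> (try ring)

lemma conj_eA_other {i j k μ : Fin n} (hij : i ≠ j) (hki : k ≠ i) (hkj : k ≠ j)
    (hμi : μ ≠ i) (hμj : μ ≠ j) (θ : ℝ) :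
    rot i j θ * eA μ k * rot i j (-θ) = eA μ k := by
  ext a b
  simp only [mul_rot_apply hij, rot_mul_apply hij, Real.cos_neg, Real.sin_neg, eA_apply]
  by_cases ha : a = i <;> by_cases ha2 : a = j <;>
    by_cases hb : b = i <;> by_cases hb2 : b = j <;>
    simp_all <;> ring

lemma eA_transpose (i j : Fin n) : (eA i j)ᵀ = -eA i j := by
  ext a b
  simp only [Matrix.transpose_apply, Matrix.neg_apply, eA_apply]
  by_cases h1 : i = a <;> by_cases h2 : j = b <;> by_cases h3 : j = a <;> by_cases h4 : i = b <;>
    simp_all <;> ring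

end Aux

set_option maxRecDepth 40000 in
set_option maxHeartbeats 1000000 in
theorem stmt4 (n : ℕ) (hn : 5 ≤ n)
    (v : Fin n → Matrix (Fin n) (Fin n) ℝ)
    (hv : v = ∑ k ∈ Finset.univ.filter (fun k : Fin n => k ≠ ⟨0, by omega⟩),
        Pi.single k (eA k (⟨0, by omega⟩ : Fin n))) :
    (⋂ (i : Fin n) (j : Fin n) (_ : 1 ≤ (i : ℕ)) (_ : i < j), Espace i j) =
        (Submodule.span ℝ {v} : Set _)
      ∧ v ≠ 0 := by
  have h0n : 0 < n := by omega
  set e0 : Fin n := ⟨0, h0n⟩ with he0def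
  have hvap : ∀ μ : Fin n, v μ = if μ = e0 then 0 else eA μ e0 := by
    intro μ
    rw [hv, Finset.sum_apply]
    rw [Finset.sum_congr rfl (fun k _ => Pi.single_apply k (eA k e0) μ)]
    rw [Finset.sum_ite_eq]
    by_cases hμ : μ = e0 <;> simp [hμ]
  -- basic index facts
  have hne_of_val : ∀ i : Fin n, 1 ≤ (i : ℕ) → i ≠ e0 := by
    intro i hi h
    rw [h] at hi
    simp [he0def] at hi
  have hval_of_ne : ∀ i : Fin n, i ≠ e0 → 1 ≤ (i : ℕ) := by
    intro i hi
    rcases Nat.eq_zero_or_pos (i : ℕ) with h | h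
    · exact absurd (Fin.ext h) hi
    · omega
  have hother : ∀ x y z : Fin n, ∃ w : Fin n, w ≠ e0 ∧ w ≠ x ∧ w ≠ y ∧ w ≠ z := by
    intro x y z
    by_contra hcon
    push_neg at hcon
    have hsub : (Finset.univ : Finset (Fin n)) ⊆ {e0, x, y, z} := by
      intro w _
      simp only [Finset.mem_insert, Finset.mem_singleton]
      by_cases h1 : w = e0
      · tauto
      by_cases h2 : w = x
      · tauto
      by_cases h3 : w = y
      · tauto
      exact Or.inr (Or.inr (Or.inr (hcon w h1 h2 h3)))
    have hc1 := Finset.card_le_card hsub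
    have hc2 : ({e0, x, y, z} : Finset (Fin n)).card ≤ 4 := by
      apply le_trans (Finset.card_insert_le _ _)
      have := Finset.card_insert_le x ({y, z} : Finset (Fin n))
      have := Finset.card_insert_le y ({z} : Finset (Fin n))
      simp_all
      omega
    rw [Finset.card_univ, Fintype.card_fin] at hc1
    omega
  have hμ1 : (⟨1, by omega⟩ : Fin n) ≠ e0 := by simp [he0def, Fin.ext_iff]
  have hμ2 : (⟨2, by omega⟩ : Fin n) ≠ e0 := by simp [he0def, Fin.ext_iff]
  have hμ12 : (⟨1, by omega⟩ : Fin n) ≠ (⟨2, by omega⟩ : Fin n) := by simp [Fin.ext_iff]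
  constructor
  · apply Set.eq_of_subset_of_subset
    · -- hard direction
      intro C hC
      simp only [Set.mem_iInter] at hC
      have hskew : ∀ μ, (C μ)ᵀ = -(C μ) :=
        (hC ⟨1, by omega⟩ ⟨2, by omega⟩ (by norm_num) (by simp [Fin.mk_lt_mk])).1
      have hsk : ∀ μ a b, C μ b a = -C μ a b := by
        intro μ a b
        have h := congrFun (congrFun (hskew μ) a) b
        simpa using h
      have hdiag : ∀ μ a, C μ a a = 0 := by
        intro μ a; have := hsk μ a a; linarith
      have hmem : ∀ i j : Fin n, i ≠ e0 → j ≠ e0 → i ≠ j → ∀ θ, rho (rot i j θ) C = C := by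
        intro i j hi hj hij θ
        rcases hij.lt_or_gt with h | h
        · exact (hC i j (hval_of_ne i hi) h).2 θ
        · have h2 := (hC j i (hval_of_ne j hj) h).2 (-θ)
          rw [show rot i j θ = rot j i (-θ) from rot_swap (Ne.symm hij) θ]
          exact h2
      have Hpi : ∀ i j μ a b : Fin n, i ≠ e0 → j ≠ e0 → i ≠ j →
          (if μ = i ∨ μ = j then (-1:ℝ) else 1) *
            ((if a = i ∨ a = j then (-1:ℝ) else 1) *
              (if b = i ∨ b = j then (-1:ℝ) else 1)) = -1 → C μ a b = 0 := by
        intro i j μ a b hi hj hij hsign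
        have h1 := congrFun (hmem i j hi hj hij Real.pi) μ
        rw [rho_apply hij] at h1
        have key : C μ a b = (if μ = i ∨ μ = j then (-1:ℝ) else 1) *
            ((if a = i ∨ a = j then (-1:ℝ) else 1) *
              ((if b = i ∨ b = j then (-1:ℝ) else 1) * C μ a b)) := by
          by_cases hm1 : μ = i
          · rw [if_pos hm1] at h1
            have h2 := congrFun (congrFun h1 a) b
            simp only [Matrix.sub_apply, Matrix.smul_apply, smul_eq_mul, Real.cos_pi,
              Real.sin_pi, conj_pi_apply hij] at h2
            rw [hm1, if_pos (Or.inl rfl)]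
            rw [hm1] at h2
            linear_combination -h2
          · by_cases hm2 : μ = j
            · rw [if_neg hm1, if_pos hm2] at h1
              have h2 := congrFun (congrFun h1 a) b
              simp only [Matrix.add_apply, Matrix.smul_apply, smul_eq_mul, Real.cos_pi,
                Real.sin_pi, conj_pi_apply hij] at h2
              rw [hm2, if_pos (Or.inr rfl)]
              rw [hm2] at h2
              linear_combination -h2
            · rw [if_neg hm1, if_neg hm2] at h1
              have h2 := congrFun (congrFun h1 a) b
              simp only [conj_pi_apply hij] at h2
              rw [if_neg (by tauto : ¬(μ = i ∨ μ = j))]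
              linear_combination -h2
        linear_combination key / 2 + (C μ a b) * hsign / 2
      have Z0 : ∀ a b, C e0 a b = 0 := by
        intro a b
        by_cases hab : a = b
        · rw [hab]; exact hdiag e0 b
        by_cases ha : a = e0
        · have hb0 : b ≠ e0 := fun h => hab (by rw [ha, h])
          obtain ⟨w, hw0, hwb, hwa, -⟩ := hother b a a
          refine Hpi b w e0 a b hb0 hw0 (Ne.symm hwb) ?_
          have h1 : e0 ≠ b := Ne.symm hb0
          have h2 : e0 ≠ w := Ne.symm hw0
          have h3 : a ≠ b := hab
          have h4 : a ≠ w := fun h => hwa h.symm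
          rw [if_neg (by tauto), if_neg (by tauto), if_pos (Or.inl rfl)]
          norm_num
        · obtain ⟨w, hw0, hwa, hwb, -⟩ := hother a b b
          refine Hpi a w e0 a b ha hw0 (Ne.symm hwa) ?_
          have h1 : e0 ≠ a := Ne.symm ha
          have h2 : e0 ≠ w := Ne.symm hw0
          have h3 : b ≠ a := fun h => hab h.symm
          have h4 : b ≠ w := fun h => hwb h.symm
          rw [if_neg (by tauto), if_pos (Or.inl rfl), if_neg (by tauto)]
          norm_num
      have Z1 : ∀ μ, μ ≠ e0 → ∀ a b, ¬(a = μ ∧ b = e0) → ¬(a = e0 ∧ b = μ) → C μ a b = 0 := by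
        intro μ hμ a b hc1 hc2
        by_cases hab : a = b
        · rw [hab]; exact hdiag μ b
        by_cases ha1 : a = μ
        · have hb0 : b ≠ e0 := fun h => hc1 ⟨ha1, h⟩
          have hbμ : b ≠ μ := fun h => hab (by rw [ha1, h])
          refine Hpi μ b μ a b hμ hb0 (Ne.symm hbμ) ?_
          rw [if_pos (Or.inl rfl), if_pos (Or.inl ha1), if_pos (Or.inr rfl)]
          norm_num
        by_cases hb1 : b = μ
        · have ha0 : a ≠ e0 := fun h => hc2 ⟨h, hb1⟩
          refine Hpi μ a μ a b hμ ha0 (Ne.symm ha1) ?_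
          rw [if_pos (Or.inl rfl), if_pos (Or.inr rfl), if_pos (Or.inl hb1)]
          norm_num
        by_cases ha0 : a = e0
        · have hb0 : b ≠ e0 := fun h => hab (ha0.trans h.symm)
          obtain ⟨w, hw0, hwμ, hwb, -⟩ := hother μ b b
          refine Hpi b w μ a b hb0 hw0 (Ne.symm hwb) ?_
          have h1 : μ ≠ b := Ne.symm hb1
          have h2 : μ ≠ w := Ne.symm hwμ
          have h3 : a ≠ b := hab
          have h4 : a ≠ w := fun h => hw0 (by rw [← h, ha0])
          rw [if_neg (by tauto), if_neg (by tauto), if_pos (Or.inl rfl)]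
          norm_num
        by_cases hb0 : b = e0
        · obtain ⟨w, hw0, hwμ, hwa, -⟩ := hother μ a a
          refine Hpi a w μ a b ha0 hw0 (Ne.symm hwa) ?_
          have h1 : μ ≠ a := Ne.symm ha1
          have h2 : μ ≠ w := Ne.symm hwμ
          have h3 : b ≠ a := fun h => hab h.symm
          have h4 : b ≠ w := fun h => hw0 (by rw [← h, hb0])
          rw [if_neg (by tauto), if_pos (Or.inl rfl), if_neg (by tauto)]
          norm_num
        · obtain ⟨w, hw0, hwμ, hwa, hwb⟩ := hother μ a b
          refine Hpi a w μ a b ha0 hw0 (Ne.symm hwa) ?_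
          have h1 : μ ≠ a := Ne.symm ha1
          have h2 : μ ≠ w := Ne.symm hwμ
          have h3 : b ≠ a := fun h => hab h.symm
          have h4 : b ≠ w := Ne.symm hwb
          rw [if_neg (by tauto), if_pos (Or.inl rfl), if_neg (by tauto)]
          norm_num
      have Z2 : ∀ μ μ' : Fin n, μ ≠ e0 → μ' ≠ e0 → μ ≠ μ' → C μ μ e0 = C μ' μ' e0 := by
        intro μ μ' h1 h2 h3
        have hh := congrFun (hmem μ μ' h1 h2 h3 (Real.pi/2)) μ
        rw [rho_apply h3, if_pos rfl] at hh
        have h4 := congrFun (congrFun hh μ) e0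
        simp only [Matrix.sub_apply, Matrix.smul_apply, smul_eq_mul, Real.cos_pi_div_two,
          Real.sin_pi_div_two, mul_rot_apply h3, rot_mul_apply h3] at h4
        simp only [if_neg (Ne.symm h1 : e0 ≠ μ), if_neg (Ne.symm h2 : e0 ≠ μ'), if_pos rfl,
          if_true] at h4
        ring_nf at h4
        linarith [h4]
      have hCμ : ∀ μ, μ ≠ e0 → C μ μ e0 = C ⟨1, by omega⟩ ⟨1, by omega⟩ e0 := by
        intro μ hμ
        by_cases h : μ = ⟨1, by omega⟩
        · rw [h]
        · exact Z2 μ ⟨1, by omega⟩ hμ hμ1 h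
      rw [SetLike.mem_coe, Submodule.mem_span_singleton]
      refine ⟨C ⟨1, by omega⟩ ⟨1, by omega⟩ e0, ?_⟩
      funext μ
      by_cases hμ : μ = e0
      · have hvμ : v μ = 0 := by rw [hvap, if_pos hμ]
        rw [Pi.smul_apply, hvμ, smul_zero]
        ext a b
        rw [Matrix.zero_apply, hμ]
        exact (Z0 a b).symm
      · have hvμ : v μ = eA μ e0 := by rw [hvap, if_neg hμ]
        rw [Pi.smul_apply, hvμ]
        ext a b
        rw [Matrix.smul_apply, eA_apply, smul_eq_mul]
        by_cases h1 : μ = a ∧ e0 = b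
        · rw [if_pos h1, if_neg (fun hh : e0 = a ∧ μ = b => hμ (h1.1.trans hh.1.symm))]
          rw [← h1.1, ← h1.2, hCμ μ hμ]
          ring
        · rw [if_neg h1]
          by_cases h2 : e0 = a ∧ μ = b
          · rw [if_pos h2, ← h2.1, ← h2.2, hsk μ μ e0, hCμ μ hμ]
            ring
          · rw [if_neg h2, Z1 μ hμ a b (fun hh => h1 ⟨hh.1.symm, hh.2.symm⟩)
              (fun hh => h2 ⟨hh.1.symm, hh.2.symm⟩)]
            ring
    · -- easy direction
      intro x hx
      rw [SetLike.mem_coe, Submodule.mem_span_singleton] at hx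
      obtain ⟨r, rfl⟩ := hx
      simp only [Set.mem_iInter]
      intro i j hi hlt
      have hij : i ≠ j := ne_of_lt hlt
      have hi0 : i ≠ e0 := hne_of_val i hi
      have hj0 : j ≠ e0 := hne_of_val j (by
        have := hlt
        have : (i : ℕ) < (j : ℕ) := hlt
        omega)
      constructor
      · intro μ
        rw [Pi.smul_apply, Matrix.transpose_smul]
        by_cases hμ : μ = e0
        · rw [hvap μ, if_pos hμ]
          simp
        · rw [hvap μ, if_neg hμ, eA_transpose]
          simp
      · intro θ
        rw [rho_smul]
        congr 1
        -- rho (rot i j θ) v = v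
        funext μ
        rw [rho_apply hij]
        by_cases hμi : μ = i
        · rw [if_pos hμi, hμi, hvap i, hvap j, if_neg hi0, if_neg hj0,
            conj_eA_i hij (Ne.symm hi0) (Ne.symm hj0), conj_eA_j hij (Ne.symm hi0) (Ne.symm hj0)]
          have hpy : Real.cos θ * Real.cos θ + Real.sin θ * Real.sin θ = 1 := by
            nlinarith [Real.sin_sq_add_cos_sq θ]
          calc Real.cos θ • (Real.cos θ • eA i e0 + Real.sin θ • eA j e0) -
                Real.sin θ • (Real.cos θ • eA j e0 - Real.sin θ • eA i e0)
              = (Real.cos θ * Real.cos θ + Real.sin θ * Real.sin θ) • eA i e0 +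
                (Real.cos θ * Real.sin θ - Real.sin θ * Real.cos θ) • eA j e0 := by module
            _ = eA i e0 := by
                rw [hpy, show Real.cos θ * Real.sin θ - Real.sin θ * Real.cos θ = 0 from by ring]
                simp
        · by_cases hμj : μ = j
          · rw [if_neg hμi, if_pos hμj, hμj, hvap i, hvap j, if_neg hi0, if_neg hj0,
              conj_eA_i hij (Ne.symm hi0) (Ne.symm hj0), conj_eA_j hij (Ne.symm hi0) (Ne.symm hj0)]
            have hpy : Real.cos θ * Real.cos θ + Real.sin θ * Real.sin θ = 1 := by
              nlinarith [Real.sin_sq_add_cos_sq θ]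
            calc Real.sin θ • (Real.cos θ • eA i e0 + Real.sin θ • eA j e0) +
                  Real.cos θ • (Real.cos θ • eA j e0 - Real.sin θ • eA i e0)
                = (Real.sin θ * Real.cos θ - Real.cos θ * Real.sin θ) • eA i e0 +
                  (Real.cos θ * Real.cos θ + Real.sin θ * Real.sin θ) • eA j e0 := by module
              _ = eA j e0 := by
                  rw [hpy, show Real.sin θ * Real.cos θ - Real.cos θ * Real.sin θ = 0 from by ring]
                  simp
          · rw [if_neg hμi, if_neg hμj]
            by_cases hμ0 : μ = e0
            · rw [hvap μ, if_pos hμ0]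
              simp
            · rw [hvap μ, if_neg hμ0]
              exact conj_eA_other hij (Ne.symm hi0) (Ne.symm hj0) hμi hμj θ
  · -- v ≠ 0
    intro h
    have h1 := congrFun h (⟨1, by omega⟩ : Fin n)
    rw [hvap, if_neg hμ1] at h1
    have h2 := congrFun (congrFun h1 (⟨1, by omega⟩ : Fin n)) e0
    rw [eA_apply] at h2
    simp [hμ1] at h2
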